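/- arXiv:2001.01296 — 2 statements merged into one kernel-verified Lean document; each statement's English description precedes it below -/
import Mathlib

section
/- If a diversity measure D : Δ* → ℝ⁺ on probability simplices is symmetric (invariant under permutations of the coordinates), expansible (invariant under appending a zero coordinate), and satisfies the Pigou–Dalton transfer principle (transferring ε ≤ (p_i − p_j)/2 from a larger coordinate p_i to a smaller p_j does not decrease D), then merging two coordinates does not increase diversity: D(…, p_i, p_{i+1}, …) ≥ D(…, p_i + p_{i+1}, …), where the right-hand side has one fewer coordinate. -/
/-- Merging: a symmetric, expansible diversity measure satisfying the
Pigou–Dalton transfer principle does not increase when two adjacent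
coordinates are merged. -/
theorem merging
    (D : ∀ k : ℕ, (Fin k → ℝ) → ℝ)
    (hnn : ∀ (k : ℕ) (p : Fin k → ℝ), (∀ i, 0 ≤ p i) → ∑ i, p i = 1 → 0 ≤ D k p)
    (hsymm : ∀ (k : ℕ) (p : Fin k → ℝ) (σ : Equiv.Perm (Fin k)),
      (∀ i, 0 ≤ p i) → ∑ i, p i = 1 → D k (p ∘ σ) = D k p)
    (hexp : ∀ (k : ℕ) (p : Fin k → ℝ),
      (∀ i, 0 ≤ p i) → ∑ i, p i = 1 → D (k + 1) (Fin.snoc p 0) = D k p)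
    (htrans : ∀ (k : ℕ) (p : Fin k → ℝ) (i j : Fin k) (ε : ℝ),
      (∀ i, 0 ≤ p i) → ∑ i, p i = 1 → p j < p i → 0 ≤ ε → ε ≤ (p i - p j) / 2 →
      D k p ≤ D k (Function.update (Function.update p i (p i - ε)) j (p j + ε)))
    (k : ℕ) (p : Fin (k + 1) → ℝ) (hp : ∀ i, 0 ≤ p i) (hs : ∑ i, p i = 1)
    (i : Fin k) :
    D k (fun j => if j = i then p i.castSucc + p i.succ else p (Fin.succAbove i.succ j))
      ≤ D (k + 1) p := by
  classical
  have ha0 : (0:ℝ) ≤ p i.castSucc := hp _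
  have hb0 : (0:ℝ) ≤ p i.succ := hp _
  set x : Fin (k+1) := i.succ with hx
  -- the tuple p with the coordinate at position x removed
  set f : Fin k → ℝ := fun j => p (x.succAbove j) with hf
  have hfi : f i = p i.castSucc := by
    simp [hf, hx]
  -- the merged tuple
  set q : Fin k → ℝ := fun j => if j = i then p i.castSucc + p x else f j with hq
  have hqdef : (fun j => if j = i then p i.castSucc + p i.succ else p (Fin.succAbove i.succ j))
      = q := by
    funext j
    by_cases h : j = i <;> simp [hq, hf, hx, h]
  have hsf : ∑ j, f j = 1 - p x := by
    have h := Fin.sum_univ_succAbove p x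
    rw [hs] at h
    simp only [hf]
    linarith
  have hqf : ∀ j, q j = f j + (if j = i then p x else 0) := by
    intro j
    by_cases h : j = i
    · subst h; simp [hq, hfi]
    · simp [hq, h]
  have hqs : ∑ j, q j = 1 := by
    rw [Finset.sum_congr rfl (fun j _ => hqf j), Finset.sum_add_distrib, hsf]
    simp
  have hqnn : ∀ j, 0 ≤ q j := by
    intro j
    by_cases h : j = i
    · subst h; simp only [hq, if_pos rfl]; exact add_nonneg ha0 (hp _)
    · simp only [hq, if_neg h, hf]; exact hp _
  set Q : Fin (k+1) → ℝ := Fin.snoc q 0 with hQ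
  have hQnn : ∀ j, 0 ≤ Q j := by
    intro j
    refine Fin.lastCases ?_ (fun j => ?_) j
    · simp [hQ]
    · simp only [hQ, Fin.snoc_castSucc]; exact hqnn j
  have hQs : ∑ j, Q j = 1 := by
    rw [hQ, Fin.sum_univ_castSucc]
    simp [hqs]
  -- the permutation sending `last` to `x` and `castSucc j` to `x.succAbove j`
  set g : Fin (k+1) → Fin (k+1) :=
    fun j => if h : j = Fin.last k then x else x.succAbove (j.castPred h) with hg
  have hginj : Function.Injective g := by
    intro u v huv
    by_cases hu : u = Fin.last k <;> by_cases hv : v = Fin.last k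
    · rw [hu, hv]
    · rw [hg] at huv; simp only [dif_pos hu, dif_neg hv] at huv
      exact absurd huv.symm (Fin.succAbove_ne x _)
    · rw [hg] at huv; simp only [dif_neg hu, dif_pos hv] at huv
      exact absurd huv (Fin.succAbove_ne x _)
    · rw [hg] at huv; simp only [dif_neg hu, dif_neg hv] at huv
      have h2 := Fin.succAbove_right_injective (p := x) huv
      have := congrArg Fin.castSucc h2
      rwa [Fin.castSucc_castPred, Fin.castSucc_castPred] at this
  set σ : Equiv.Perm (Fin (k+1)) :=
    Equiv.ofBijective g (Finite.injective_iff_bijective.1 hginj) with hσ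
  have hσapp : ∀ j, σ j = g j := fun j => rfl
  have hpσ : p ∘ ⇑σ = Fin.snoc f (p x) := by
    funext j
    refine Fin.lastCases ?_ (fun j => ?_) j
    · simp [Function.comp, hσapp, hg]
    · have hne : (j.castSucc : Fin (k+1)) ≠ Fin.last k := (Fin.castSucc_lt_last j).ne
      simp [Function.comp, hσapp, hg, hne, hf]
  have hDexp : D (k+1) Q = D k q := by
    rw [hQ]; exact hexp k q hqnn hqs
  rw [← hDexp]
  -- now the goal is `D (k+1) Q ≤ D (k+1) p`
  have hQcs : Q i.castSucc = p i.castSucc + p x := by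
    simp [hQ, hq]
  have hQlast : Q (Fin.last k) = 0 := by simp [hQ]
  rcases eq_or_lt_of_le (add_nonneg ha0 hb0) with h0 | h0
  · -- degenerate case : both merged coordinates are zero
    have haz : p i.castSucc = 0 := by linarith
    have hbz : p x = 0 := by rw [hx]; linarith
    have hqf2 : q = f := by
      funext j
      by_cases h : j = i
      · subst h; simp [hq, haz, hbz, hfi]
      · simp [hq, h]
    have hQσ : Q = p ∘ ⇑σ := by
      rw [hpσ, hQ, hbz, hqf2]
    rw [hQσ, hsymm (k+1) p σ hp hs]
  · -- main case : use the transfer principle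
    set ε : ℝ := min (p i.castSucc) (p x) with hε
    have hε0 : 0 ≤ ε := le_min ha0 (hp _)
    have hεle : ε ≤ (Q i.castSucc - Q (Fin.last k)) / 2 := by
      rw [hQcs, hQlast]
      rcases min_le_iff.mpr (Or.inl (le_refl (p i.castSucc))) with _
      have h1 : ε ≤ p i.castSucc := min_le_left _ _
      have h2 : ε ≤ p x := min_le_right _ _
      linarith
    have hlt : Q (Fin.last k) < Q i.castSucc := by
      rw [hQcs, hQlast]; exact h0
    have hstep := htrans (k+1) Q i.castSucc (Fin.last k) ε hQnn hQs hlt hε0 hεle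
    -- identify the result of the transfer
    have hkey : Function.update (Function.update Q i.castSucc (Q i.castSucc - ε))
        (Fin.last k) (Q (Fin.last k) + ε)
        = Fin.snoc (Function.update f i (p i.castSucc + p x - ε)) ε := by
      funext j
      refine Fin.lastCases ?_ (fun j => ?_) j
      · rw [Function.update_self, hQlast, Fin.snoc_last]; ring
      · have hne : (j.castSucc : Fin (k+1)) ≠ Fin.last k := (Fin.castSucc_lt_last j).ne
        rw [Function.update_of_ne hne, Fin.snoc_castSucc]
        by_cases h : j = i
        · subst h
          rw [Function.update_self, Function.update_self, hQcs]
        · have hne2 : (j.castSucc : Fin (k+1)) ≠ i.castSucc := by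
            simpa [Fin.castSucc_inj] using h
          rw [Function.update_of_ne hne2, Function.update_of_ne h]
          simp [hQ, hq, h]
    rw [hkey] at hstep
    refine le_trans hstep ?_
    by_cases hab : p x ≤ p i.castSucc
    · -- ε = p x, the transferred tuple is p ∘ σ
      have hεb : ε = p x := min_eq_right hab
      have : Function.update f i (p i.castSucc + p x - ε) = f := by
        rw [hεb]
        have : p i.castSucc + p x - p x = f i := by rw [hfi]; ring
        rw [this, Function.update_eq_self]
      rw [this, hεb, ← hpσ, hsymm (k+1) p σ hp hs]
    · -- ε = p i.castSucc, compose with a swap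
      push_neg at hab
      have hεa : ε = p i.castSucc := min_eq_left hab.le
      set σ' : Equiv.Perm (Fin (k+1)) :=
        (Equiv.swap (i.castSucc : Fin (k+1)) (Fin.last k)).trans σ with hσ'
      have hpσ' : p ∘ ⇑σ' = Fin.snoc (Function.update f i (p x)) (p i.castSucc) := by
        funext j
        have hcomp : (p ∘ ⇑σ') j = (p ∘ ⇑σ) ((Equiv.swap (i.castSucc : Fin (k+1))
            (Fin.last k)) j) := rfl
        rw [hcomp, hpσ]
        refine Fin.lastCases ?_ (fun j => ?_) j
        · rw [Equiv.swap_apply_right, Fin.snoc_last, Fin.snoc_castSucc, hfi]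
        · by_cases h : j = i
          · subst h
            rw [Equiv.swap_apply_left, Fin.snoc_last, Fin.snoc_castSucc,
              Function.update_self]
          · have hne2 : (j.castSucc : Fin (k+1)) ≠ i.castSucc := by
              simpa [Fin.castSucc_inj] using h
            have hne : (j.castSucc : Fin (k+1)) ≠ Fin.last k := (Fin.castSucc_lt_last j).ne
            rw [Equiv.swap_apply_of_ne_of_ne hne2 hne, Fin.snoc_castSucc,
              Fin.snoc_castSucc, Function.update_of_ne h]
      have hval : p i.castSucc + p x - ε = p x := by rw [hεa]; ring
      rw [hval, hεa, ← hpσ', hsymm (k+1) p σ' hp hs]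
end

section
/- If a diversity measure D satisfies symmetry, expansibility, the transfer principle, and normalization (D(1/k,…,1/k) = k for all k), then for every p ∈ Δ^{k-1} one has 1 ≤ D(p) ≤ k. -/
section Aux

/-- Sum after a two-point redistribution. -/
lemma sum_double_update {k : ℕ} (p : Fin k → ℝ) (hs : ∑ i, p i = 1)
    (i j : Fin k) (hij : i ≠ j) (a b : ℝ) (hab : a + b = p i + p j) :
    ∑ x, Function.update (Function.update p i a) j b x = 1 := by
  classical
  rw [Finset.sum_update_of_mem (Finset.mem_univ j)]
  have hi : i ∈ Finset.univ \ ({j} : Finset (Fin k)) := by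
    simp [hij]
  rw [Finset.sum_update_of_mem hi]
  have hsub : ({i, j} : Finset (Fin k)) ⊆ Finset.univ := Finset.subset_univ _
  have h1 : (Finset.univ \ ({j} : Finset (Fin k))) \ ({i} : Finset (Fin k))
      = Finset.univ \ ({i, j} : Finset (Fin k)) := by
    ext x; simp; tauto
  rw [h1, Finset.sum_sdiff_eq_sub hsub, hs, Finset.sum_pair hij]
  linarith

/-- Diversity of a point mass is 1. -/
lemma div_point_mass
    (D : ∀ k : ℕ, (Fin k → ℝ) → ℝ)
    (hsymm : ∀ (k : ℕ) (p : Fin k → ℝ) (σ : Equiv.Perm (Fin k)),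
      (∀ i, 0 ≤ p i) → ∑ i, p i = 1 → D k (p ∘ σ) = D k p)
    (hexp : ∀ (k : ℕ) (p : Fin k → ℝ),
      (∀ i, 0 ≤ p i) → ∑ i, p i = 1 → D (k + 1) (Fin.snoc p 0) = D k p)
    (hnorm : ∀ k : ℕ, 0 < k → D k (fun _ => (k : ℝ)⁻¹) = k) :
    ∀ (k : ℕ) (z : Fin k), D k (fun i => if i = z then 1 else 0) = 1 := by
  classical
  intro k
  induction k with
  | zero => exact fun z => z.elim0
  | succ k ih =>
    have hnn : ∀ (m : ℕ) (w : Fin m) (i : Fin m),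
        (0:ℝ) ≤ if i = w then 1 else 0 := by
      intro m w i; split <;> norm_num
    have hsum : ∀ (m : ℕ) (w : Fin m), ∑ i, (if i = w then (1:ℝ) else 0) = 1 := by
      intro m w; simp
    have h0 : D (k+1) (fun i => if i = (0 : Fin (k+1)) then 1 else 0) = 1 := by
      cases k with
      | zero =>
        have h1 : (fun i : Fin 1 => if i = 0 then (1:ℝ) else 0)
            = fun _ : Fin 1 => ((1:ℕ) : ℝ)⁻¹ := by
          funext i
          simp [Subsingleton.elim i 0]
        rw [h1, hnorm 1 one_pos]; norm_num
      | succ m =>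
        have hsnoc : (fun i : Fin (m+2) => if i = 0 then (1:ℝ) else 0)
            = Fin.snoc (fun i : Fin (m+1) => if i = 0 then (1:ℝ) else 0) 0 := by
          funext i
          refine Fin.lastCases ?_ ?_ i
          · simp [Fin.snoc]
          · intro j
            simp [Fin.snoc_castSucc, Fin.castSucc_eq_zero_iff]
        rw [hsnoc, hexp _ _ (hnn _ _) (hsum _ _), ih 0]
    intro z
    have hcomp : ((fun i => if i = (0:Fin (k+1)) then (1:ℝ) else 0) ∘ (Equiv.swap 0 z))
        = fun i => if i = z then 1 else 0 := by
      funext i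
      by_cases h : i = z
      · simp [h, Equiv.swap_apply_right]
      · have h2 : Equiv.swap (0 : Fin (k+1)) z i ≠ 0 := by
          intro hc
          have := (Equiv.swap (0 : Fin (k+1)) z).injective
            (hc.trans (Equiv.swap_apply_right (0 : Fin (k+1)) z).symm)
          exact h this
        simp [h, h2]
    rw [← hcomp, hsymm (k+1) _ (Equiv.swap 0 z) (hnn _ _) (hsum _ _), h0]

/-- Lower bound by induction on the size of the support. -/
lemma div_lower
    (D : ∀ k : ℕ, (Fin k → ℝ) → ℝ)
    (htrans : ∀ (k : ℕ) (p : Fin k → ℝ) (i j : Fin k) (ε : ℝ),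
      (∀ i, 0 ≤ p i) → ∑ i, p i = 1 → p j < p i → 0 ≤ ε → ε ≤ (p i - p j) / 2 →
      D k p ≤ D k (Function.update (Function.update p i (p i - ε)) j (p j + ε)))
    (hpoint : ∀ (k : ℕ) (z : Fin k), D k (fun i => if i = z then 1 else 0) = 1) :
    ∀ (n k : ℕ), 0 < k → ∀ (p : Fin k → ℝ), (∀ i, 0 ≤ p i) → ∑ i, p i = 1 →
      (Finset.univ.filter (fun i => p i ≠ 0)).card ≤ n → 1 ≤ D k p := by
  classical
  intro n
  induction n with
  | zero =>
    intro k hk p hp hs hcard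
    exfalso
    have hz : ∀ i, p i = 0 := by
      intro i
      by_contra h
      have : i ∈ Finset.univ.filter (fun i => p i ≠ 0) := by simp [h]
      have := Finset.card_pos.mpr ⟨i, this⟩
      omega
    simp [hz] at hs
  | succ n ih =>
    intro k hk p hp hs hcard
    set S := Finset.univ.filter (fun i => p i ≠ 0) with hS
    have hSne : S.Nonempty := by
      by_contra h
      rw [Finset.not_nonempty_iff_eq_empty] at h
      have hz : ∀ i, p i = 0 := by
        intro i
        by_contra hpi
        have : i ∈ S := by simp [hS, hpi]
        simp [h] at this
      simp [hz] at hs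
    by_cases h1 : S.card ≤ 1
    · -- p is a point mass
      obtain ⟨z, hz⟩ := Finset.card_eq_one.mp (le_antisymm h1 (Finset.card_pos.mpr hSne))
      have hzero : ∀ i, i ≠ z → p i = 0 := by
        intro i hiz
        by_contra h
        have : i ∈ S := by simp [hS, h]
        rw [hz] at this
        exact hiz (Finset.mem_singleton.mp this)
      have hpz : p z = 1 := by
        have := Finset.sum_eq_single_of_mem z (Finset.mem_univ z)
          (fun i _ hiz => hzero i hiz)
        rw [this] at hs
        exact hs
      have hpm : p = fun i => if i = z then 1 else 0 := by
        funext i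
        by_cases h : i = z
        · simp [h, hpz]
        · simp [h, hzero i h]
      rw [hpm, hpoint]
    · push_neg at h1
      -- pick a maximizer i* and another support point j
      obtain ⟨istar, -, hmax⟩ := Finset.exists_max_image Finset.univ p
        ⟨⟨0, hk⟩, Finset.mem_univ _⟩
      have histar : 0 < p istar := by
        obtain ⟨z, hzS⟩ := hSne
        have hz : p z ≠ 0 := by simpa [hS] using hzS
        exact lt_of_lt_of_le (lt_of_le_of_ne (hp z) (Ne.symm hz)) (hmax z (Finset.mem_univ z))
      obtain ⟨j, hjS, hjne⟩ := Finset.exists_mem_ne h1 istar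
      have hpj : 0 < p j := lt_of_le_of_ne (hp j) (Ne.symm (by simpa [hS] using hjS))
      set q : Fin k → ℝ :=
        Function.update (Function.update p istar (p istar + p j)) j 0 with hq
      have hij : istar ≠ j := fun h => hjne h.symm
      have hqi : q istar = p istar + p j := by
        rw [hq, Function.update_of_ne hij, Function.update_self]
      have hqj : q j = 0 := by rw [hq, Function.update_self]
      have hqo : ∀ x, x ≠ istar → x ≠ j → q x = p x := by
        intro x hxi hxj
        rw [hq, Function.update_of_ne hxj, Function.update_of_ne hxi]
      have hqnn : ∀ x, 0 ≤ q x := by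
        intro x
        by_cases hx1 : x = istar
        · rw [hx1, hqi]; positivity
        · by_cases hx2 : x = j
          · rw [hx2, hqj]
          · rw [hqo x hx1 hx2]; exact hp x
      have hqs : ∑ x, q x = 1 :=
        sum_double_update p hs istar j hij _ _ (by linarith)
      -- transfer from q back to p
      have hback : Function.update (Function.update q istar (q istar - p j)) j (q j + p j) = p := by
        funext x
        by_cases hx2 : x = j
        · rw [hx2, Function.update_self, hqj]; ring
        · rw [Function.update_of_ne hx2]
          by_cases hx1 : x = istar
          · rw [hx1, Function.update_self, hqi]; ring
          · rw [Function.update_of_ne hx1, hqo x hx1 hx2]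
      have hstep := htrans k q istar j (p j) hqnn hqs
        (by rw [hqi, hqj]; positivity) (le_of_lt hpj)
        (by rw [hqi, hqj]; have := hmax j (Finset.mem_univ j); linarith)
      rw [hback] at hstep
      refine le_trans ?_ hstep
      refine ih k hk q hqnn hqs ?_
      have hsub : Finset.univ.filter (fun i => q i ≠ 0) ⊆ S.erase j := by
        intro x hx
        have hqx : q x ≠ 0 := by simpa using hx
        have hxj : x ≠ j := by
          intro h; rw [h, hqj] at hqx; exact hqx rfl
        refine Finset.mem_erase.mpr ⟨hxj, ?_⟩
        by_cases hx1 : x = istar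
        · simp [hS, hx1, histar.ne']
        · rw [hqo x hx1 hxj] at hqx
          simp [hS, hqx]
      calc (Finset.univ.filter (fun i => q i ≠ 0)).card
          ≤ (S.erase j).card := Finset.card_le_card hsub
        _ = S.card - 1 := Finset.card_erase_of_mem hjS
        _ ≤ n := by omega

/-- Upper bound by induction on the number of non-uniform coordinates. -/
lemma div_upper
    (D : ∀ k : ℕ, (Fin k → ℝ) → ℝ)
    (htrans : ∀ (k : ℕ) (p : Fin k → ℝ) (i j : Fin k) (ε : ℝ),
      (∀ i, 0 ≤ p i) → ∑ i, p i = 1 → p j < p i → 0 ≤ ε → ε ≤ (p i - p j) / 2 →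
      D k p ≤ D k (Function.update (Function.update p i (p i - ε)) j (p j + ε)))
    (hnorm : ∀ k : ℕ, 0 < k → D k (fun _ => (k : ℝ)⁻¹) = k) :
    ∀ (n k : ℕ), 0 < k → ∀ (p : Fin k → ℝ), (∀ i, 0 ≤ p i) → ∑ i, p i = 1 →
      (Finset.univ.filter (fun i => p i ≠ (k : ℝ)⁻¹)).card ≤ n → D k p ≤ k := by
  classical
  intro n
  induction n with
  | zero =>
    intro k hk p hp hs hcard
    have hu : ∀ i, p i = (k : ℝ)⁻¹ := by
      intro i
      by_contra h
      have : i ∈ Finset.univ.filter (fun i => p i ≠ (k : ℝ)⁻¹) := by simp [h]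
      have := Finset.card_pos.mpr ⟨i, this⟩
      omega
    have : p = fun _ => (k : ℝ)⁻¹ := funext hu
    rw [this, hnorm k hk]
  | succ n ih =>
    intro k hk p hp hs hcard
    set m : ℝ := (k : ℝ)⁻¹ with hm
    set T := Finset.univ.filter (fun i => p i ≠ m) with hT
    by_cases hTe : T = ∅
    · have hu : ∀ i, p i = m := by
        intro i
        by_contra h
        have : i ∈ T := by simp [hT, h]
        simp [hTe] at this
      have : p = fun _ => (k : ℝ)⁻¹ := funext hu
      rw [this, hnorm k hk]
    · have hksum : ∑ _i : Fin k, m = 1 := by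
        rw [Finset.sum_const, Finset.card_univ, Fintype.card_fin, nsmul_eq_mul, hm]
        field_simp
      obtain ⟨t, htT⟩ := Finset.nonempty_iff_ne_empty.mpr hTe
      have htm : p t ≠ m := by simpa [hT] using htT
      have hex1 : ∃ i, m < p i := by
        by_contra h
        push_neg at h
        rcases lt_or_gt_of_ne htm with h1 | h1
        · have := Finset.sum_lt_sum (fun i _ => h i) ⟨t, Finset.mem_univ t, h1⟩
          rw [hs, hksum] at this
          exact lt_irrefl _ this
        · exact absurd (h t) (not_le.mpr h1)
      have hex2 : ∃ j, p j < m := by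
        by_contra h
        push_neg at h
        rcases lt_or_gt_of_ne htm with h1 | h1
        · exact absurd (h t) (not_le.mpr h1)
        · have := Finset.sum_lt_sum (fun i _ => h i) ⟨t, Finset.mem_univ t, h1⟩
          rw [hs, hksum] at this
          exact lt_irrefl _ this
      obtain ⟨i, hi⟩ := hex1
      obtain ⟨j, hj⟩ := hex2
      have hji : p j < p i := lt_trans hj hi
      have hij : i ≠ j := by
        intro h; rw [h] at hji; exact lt_irrefl _ hji
      set ε : ℝ := min (p i - m) (m - p j) with hε
      have hε0 : 0 ≤ ε := le_min (by linarith) (by linarith)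
      have hεle : ε ≤ (p i - p j) / 2 := by
        have h1 : ε ≤ p i - m := min_le_left _ _
        have h2 : ε ≤ m - p j := min_le_right _ _
        linarith
      set p' : Fin k → ℝ :=
        Function.update (Function.update p i (p i - ε)) j (p j + ε) with hp'
      have hpi' : p' i = p i - ε := by
        rw [hp', Function.update_of_ne hij, Function.update_self]
      have hpj' : p' j = p j + ε := by rw [hp', Function.update_self]
      have hpo : ∀ x, x ≠ i → x ≠ j → p' x = p x := by
        intro x hxi hxj
        rw [hp', Function.update_of_ne hxj, Function.update_of_ne hxi]
      have hstep := htrans k p i j ε hp hs hji hε0 hεle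
      rw [← hp'] at hstep
      refine le_trans hstep ?_
      have hm0 : 0 ≤ m := by rw [hm]; positivity
      have hp'nn : ∀ x, 0 ≤ p' x := by
        intro x
        by_cases hx1 : x = i
        · rw [hx1, hpi']
          have : ε ≤ p i - m := min_le_left _ _
          linarith
        · by_cases hx2 : x = j
          · rw [hx2, hpj']; have := hp j; linarith
          · rw [hpo x hx1 hx2]; exact hp x
      have hp's : ∑ x, p' x = 1 := by
        rw [hp']
        exact sum_double_update p hs i j hij _ _ (by ring)
      refine ih k hk p' hp'nn hp's ?_
      have hiT : i ∈ T := by simp [hT, hi.ne']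
      have hjT : j ∈ T := by simp [hT, hj.ne]
      have hkey : ∃ z ∈ T, ∀ x, p' x ≠ m → x ∈ T.erase z := by
        rcases le_total (p i - m) (m - p j) with hc | hc
        · refine ⟨i, hiT, fun x hx => ?_⟩
          have hεv : ε = p i - m := min_eq_left hc
          have hxi : x ≠ i := by
            intro h
            rw [h, hpi', hεv] at hx
            exact hx (by ring)
          refine Finset.mem_erase.mpr ⟨hxi, ?_⟩
          by_cases hx2 : x = j
          · simp [hT, hx2, hj.ne]
          · rw [hpo x hxi hx2] at hx
            simp [hT, hx]
        · refine ⟨j, hjT, fun x hx => ?_⟩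
          have hεv : ε = m - p j := min_eq_right hc
          have hxj : x ≠ j := by
            intro h
            rw [h, hpj', hεv] at hx
            exact hx (by ring)
          refine Finset.mem_erase.mpr ⟨hxj, ?_⟩
          by_cases hx1 : x = i
          · simp [hT, hx1, hi.ne']
          · rw [hpo x hx1 hxj] at hx
            simp [hT, hx]
      obtain ⟨z, hzT, hsub⟩ := hkey
      have hsub' : Finset.univ.filter (fun x => p' x ≠ m) ⊆ T.erase z := by
        intro x hx
        exact hsub x (by simpa using hx)
      calc (Finset.univ.filter (fun x => p' x ≠ m)).card
          ≤ (T.erase z).card := Finset.card_le_card hsub'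
        _ = T.card - 1 := Finset.card_erase_of_mem hzT
        _ ≤ n := by
            have : 0 < T.card := Finset.card_pos.mpr ⟨z, hzT⟩
            omega

end Aux

/-- Bounds for diversity values: with normalization, any diversity value lies
between 1 and the number of coordinates. -/
theorem bounds_for_diversity_values
    (D : ∀ k : ℕ, (Fin k → ℝ) → ℝ)
    (hsymm : ∀ (k : ℕ) (p : Fin k → ℝ) (σ : Equiv.Perm (Fin k)),
      (∀ i, 0 ≤ p i) → ∑ i, p i = 1 → D k (p ∘ σ) = D k p)
    (hexp : ∀ (k : ℕ) (p : Fin k → ℝ),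
      (∀ i, 0 ≤ p i) → ∑ i, p i = 1 → D (k + 1) (Fin.snoc p 0) = D k p)
    (htrans : ∀ (k : ℕ) (p : Fin k → ℝ) (i j : Fin k) (ε : ℝ),
      (∀ i, 0 ≤ p i) → ∑ i, p i = 1 → p j < p i → 0 ≤ ε → ε ≤ (p i - p j) / 2 →
      D k p ≤ D k (Function.update (Function.update p i (p i - ε)) j (p j + ε)))
    (hnorm : ∀ k : ℕ, 0 < k → D k (fun _ => (k : ℝ)⁻¹) = k)
    (k : ℕ) (hk : 0 < k) (p : Fin k → ℝ) (hp : ∀ i, 0 ≤ p i) (hs : ∑ i, p i = 1) :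
    1 ≤ D k p ∧ D k p ≤ k := by
  classical
  constructor
  · exact div_lower D htrans (div_point_mass D hsymm hexp hnorm) k k hk p hp hs
      (le_trans (Finset.card_filter_le _ _) (by simp))
  · exact div_upper D htrans hnorm k k hk p hp hs
      (le_trans (Finset.card_filter_le _ _) (by simp))
end
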